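/- Let F₂ be the free group on two generators and n ≥ 2. Then the homomorphism φ : F₂ⁿ → ℤ sending every standard free generator of every factor to 1 is surjective with finitely generated kernel. -/

import Mathlib

namespace BBaux

abbrev FF := FreeGroup (Fin 2)

/-- exponent-sum homomorphism on the free group -/
def ψ : FF →* Multiplicative ℤ := FreeGroup.lift fun _ => Multiplicative.ofAdd (1 : ℤ)

lemma ψ_of (x : Fin 2) : ψ (FreeGroup.of x) = Multiplicative.ofAdd (1 : ℤ) :=
  FreeGroup.lift_apply_of

section

variable (n : ℕ) (hn : 2 ≤ n)

def i0 : Fin n := ⟨0, by omega⟩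
def i1 : Fin n := ⟨1, by omega⟩

lemma i1_ne_i0 : i1 n hn ≠ i0 n hn := by
  simp [i0, i1, Fin.ext_iff]

/-- the injections of the generator `of 0` -/
abbrev u (i : Fin n) : Fin n → FF := Pi.mulSingle i (FreeGroup.of 0)

/-- the finite generating set of the kernel -/
def S : Set (Fin n → FF) :=
  (Set.range fun i : Fin n => Pi.mulSingle i (FreeGroup.of 0 * (FreeGroup.of 1)⁻¹)) ∪
    (Set.range fun i : Fin n => u n i * (u n (i0 n hn))⁻¹) ∪
    {u n (i0 n hn) * (u n (i1 n hn))⁻¹}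

lemma S_finite : (S n hn).Finite :=
  ((Set.finite_range _).union (Set.finite_range _)).union (Set.finite_singleton _)

def H : Subgroup (Fin n → FF) := Subgroup.closure (S n hn)

variable {n}

lemma hS1 (i : Fin n) : Pi.mulSingle i (FreeGroup.of 0 * (FreeGroup.of 1)⁻¹) ∈ H n hn :=
  Subgroup.subset_closure (Or.inl (Or.inl ⟨i, rfl⟩))

lemma hS2 (i : Fin n) : u n i * (u n (i0 n hn))⁻¹ ∈ H n hn :=
  Subgroup.subset_closure (Or.inl (Or.inr ⟨i, rfl⟩))

lemma hS3 : u n (i0 n hn) * (u n (i1 n hn))⁻¹ ∈ H n hn :=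
  Subgroup.subset_closure (Or.inr rfl)

/-- reference index distinct from `i` -/
def ri (i : Fin n) : Fin n := if i = i0 n hn then i1 n hn else i0 n hn

lemma ri_ne (i : Fin n) : ri hn i ≠ i := by
  by_cases h : i = i0 n hn
  · subst h; simpa [ri] using i1_ne_i0 n hn
  · simpa [ri, h] using Ne.symm h

lemma key0 (i : Fin n) : u n i * (u n (ri hn i))⁻¹ ∈ H n hn := by
  by_cases h : i = i0 n hn
  · subst h; simpa [ri] using hS3 hn
  · simpa [ri, h] using hS2 hn i

lemma key1 (i : Fin n) (x : Fin 2) :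
    Pi.mulSingle i (FreeGroup.of x) * (u n (ri hn i))⁻¹ ∈ H n hn := by
  by_cases h0 : x = 0
  · subst h0; exact key0 hn i
  · have h1 : x = 1 := by omega
    subst h1
    have hx : Pi.mulSingle i (FreeGroup.of (1 : Fin 2)) =
        (Pi.mulSingle i (FreeGroup.of 0 * (FreeGroup.of 1)⁻¹))⁻¹ * u n i := by
      rw [← Pi.mulSingle_inv, ← Pi.mulSingle_mul]
      group
    rw [hx, mul_assoc]
    exact mul_mem (inv_mem (hS1 hn i)) (key0 hn i)

lemma step1 (i : Fin n) (a : FF) :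
    Pi.mulSingle i a * (u n (ri hn i)) ^ (-(Multiplicative.toAdd (ψ a))) ∈ H n hn := by
  induction a using FreeGroup.induction_on with
  | C1 => simpa using one_mem (H n hn)
  | of x =>
    have hx : ψ (FreeGroup.of x) = Multiplicative.ofAdd (1 : ℤ) := ψ_of x
    rw [hx]
    simpa using key1 hn i x
  | inv_of x _ih =>
    rw [map_inv, ψ_of x]
    have hC : Commute (u n (ri hn i)) (Pi.mulSingle i (FreeGroup.of x)) :=
      Pi.mulSingle_commute (ri_ne hn i) _ _
    have : Pi.mulSingle i ((FreeGroup.of x)⁻¹) * u n (ri hn i) =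
        (Pi.mulSingle i (FreeGroup.of x) * (u n (ri hn i))⁻¹)⁻¹ := by
      rw [Pi.mulSingle_inv, mul_inv_rev, inv_inv, hC.inv_right.eq]
    simpa [this] using inv_mem (key1 hn i x)
  | mul a b ha hb =>
    have hC : ∀ (k : ℤ) (c : FF),
        u n (ri hn i) ^ k * Pi.mulSingle i c = Pi.mulSingle i c * u n (ri hn i) ^ k :=
      fun k c => ((Pi.mulSingle_commute (f := fun _ => FF) (ri_ne hn i) (FreeGroup.of 0) c).zpow_left k).eq
    have key : Pi.mulSingle i (a * b) *
          u n (ri hn i) ^ (-(Multiplicative.toAdd (ψ (a * b)))) =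
        (Pi.mulSingle i a * u n (ri hn i) ^ (-(Multiplicative.toAdd (ψ a)))) *
          (Pi.mulSingle i b * u n (ri hn i) ^ (-(Multiplicative.toAdd (ψ b)))) := by
      rw [map_mul ψ a b, toAdd_mul, Pi.mulSingle_mul]
      rw [show Pi.mulSingle i a * u n (ri hn i) ^ (-(Multiplicative.toAdd (ψ a))) *
            (Pi.mulSingle i b * u n (ri hn i) ^ (-(Multiplicative.toAdd (ψ b)))) =
          Pi.mulSingle i a * (u n (ri hn i) ^ (-(Multiplicative.toAdd (ψ a))) *
            Pi.mulSingle i b) * u n (ri hn i) ^ (-(Multiplicative.toAdd (ψ b))) from by group,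
        hC]
      group
    rw [key]
    exact mul_mem ha hb

lemma step1' (i : Fin n) (a : FF) :
    Pi.mulSingle i a * (u n (i0 n hn)) ^ (-(Multiplicative.toAdd (ψ a))) ∈ H n hn := by
  by_cases hi : i = i0 n hn
  · subst hi
    have h := step1 hn (i0 n hn) a
    rw [show ri hn (i0 n hn) = i1 n hn by simp [ri]] at h
    set m : ℤ := -(Multiplicative.toAdd (ψ a)) with hm
    have ht : u n (i1 n hn) * (u n (i0 n hn))⁻¹ ∈ H n hn := hS2 hn _
    have hCt : Commute (u n (i1 n hn) * (u n (i0 n hn))⁻¹) (u n (i0 n hn)) :=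
      (Pi.mulSingle_commute (i1_ne_i0 n hn) _ _).mul_left (Commute.refl _).inv_left
    have c2 : Commute ((u n (i1 n hn) * (u n (i0 n hn))⁻¹) ^ (-m)) (u n (i0 n hn) ^ m) :=
      hCt.zpow_zpow _ _
    have key : Pi.mulSingle (i0 n hn) a * u n (i0 n hn) ^ m =
        (Pi.mulSingle (i0 n hn) a * u n (i1 n hn) ^ m) *
          (u n (i1 n hn) * (u n (i0 n hn))⁻¹) ^ (-m) := by
      have e1 : u n (i1 n hn) = (u n (i1 n hn) * (u n (i0 n hn))⁻¹) * u n (i0 n hn) := by group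
      calc Pi.mulSingle (i0 n hn) a * u n (i0 n hn) ^ m
          = Pi.mulSingle (i0 n hn) a * (u n (i1 n hn) * (u n (i0 n hn))⁻¹) ^ m *
            ((u n (i1 n hn) * (u n (i0 n hn))⁻¹) ^ (-m) * u n (i0 n hn) ^ m) := by group
        _ = Pi.mulSingle (i0 n hn) a * (u n (i1 n hn) * (u n (i0 n hn))⁻¹) ^ m *
            (u n (i0 n hn) ^ m * (u n (i1 n hn) * (u n (i0 n hn))⁻¹) ^ (-m)) := by rw [c2.eq]
        _ = Pi.mulSingle (i0 n hn) a *
            ((u n (i1 n hn) * (u n (i0 n hn))⁻¹) * u n (i0 n hn)) ^ m *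
            (u n (i1 n hn) * (u n (i0 n hn))⁻¹) ^ (-m) := by rw [hCt.mul_zpow]; group
        _ = _ := by rw [← e1]
    rw [key]
    exact mul_mem h (zpow_mem ht _)
  · have h := step1 hn i a
    rwa [show ri hn i = i0 n hn by simp [ri, hi]] at h

lemma uz (i : Fin n) (k : ℤ) : u n i ^ k = Pi.mulSingle i (FreeGroup.of 0 ^ k) :=
  (map_zpow (MonoidHom.mulSingle (fun _ : Fin n => FF) i) (FreeGroup.of 0) k).symm

lemma hconjS (s : Fin n → FF) (hs : s ∈ S n hn) (k : ℤ) :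
    u n (i0 n hn) ^ k * s * u n (i0 n hn) ^ (-k) ∈ H n hn := by
  have hcu : ∀ i : Fin n, Commute (u n (i0 n hn)) (u n i) := by
    intro i
    by_cases h : i = i0 n hn
    · subst h; exact Commute.refl _
    · exact Pi.mulSingle_commute (f := fun _ => FF) (Ne.symm h) _ _
  rcases hs with (⟨i, rfl⟩ | ⟨i, rfl⟩) | hs
  · beta_reduce
    by_cases h : i = i0 n hn
    · subst h
      rw [uz (i0 n hn) k, uz (i0 n hn) (-k), ← Pi.mulSingle_mul, ← Pi.mulSingle_mul]
      have h0 := step1' hn (i0 n hn)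
        (FreeGroup.of 0 ^ k * (FreeGroup.of 0 * (FreeGroup.of 1)⁻¹) * FreeGroup.of 0 ^ (-k))
      have hl : Multiplicative.toAdd
          (ψ (FreeGroup.of 0 ^ k * (FreeGroup.of 0 * (FreeGroup.of 1)⁻¹) *
            FreeGroup.of 0 ^ (-k))) = 0 := by
        simp [map_mul, map_zpow, map_inv, ψ_of]
      rw [hl] at h0
      simpa using h0
    · have hc : Commute (u n (i0 n hn))
          (Pi.mulSingle i (FreeGroup.of 0 * (FreeGroup.of 1)⁻¹)) :=
        Pi.mulSingle_commute (f := fun _ => FF) (Ne.symm h) _ _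
      have he : u n (i0 n hn) ^ k * Pi.mulSingle i (FreeGroup.of 0 * (FreeGroup.of 1)⁻¹) *
          u n (i0 n hn) ^ (-k) = Pi.mulSingle i (FreeGroup.of 0 * (FreeGroup.of 1)⁻¹) := by
        rw [(hc.zpow_left k).eq]; group
      rw [he]; exact hS1 hn i
  · beta_reduce
    have hc : Commute (u n (i0 n hn)) (u n i * (u n (i0 n hn))⁻¹) :=
      (hcu i).mul_right (Commute.refl _).inv_right
    have he : u n (i0 n hn) ^ k * (u n i * (u n (i0 n hn))⁻¹) * u n (i0 n hn) ^ (-k) =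
        u n i * (u n (i0 n hn))⁻¹ := by
      rw [(hc.zpow_left k).eq]; group
    rw [he]; exact hS2 hn i
  · rcases hs with rfl
    have hc : Commute (u n (i0 n hn)) (u n (i0 n hn) * (u n (i1 n hn))⁻¹) :=
      (Commute.refl _).mul_right (hcu (i1 n hn)).inv_right
    have he : u n (i0 n hn) ^ k * (u n (i0 n hn) * (u n (i1 n hn))⁻¹) * u n (i0 n hn) ^ (-k) =
        u n (i0 n hn) * (u n (i1 n hn))⁻¹ := by
      rw [(hc.zpow_left k).eq]; group
    rw [he]; exact hS3 hn

lemma hconj (k : ℤ) {g : Fin n → FF} (hg : g ∈ H n hn) :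
    u n (i0 n hn) ^ k * g * u n (i0 n hn) ^ (-k) ∈ H n hn := by
  refine Subgroup.closure_induction
    (p := fun g _ => u n (i0 n hn) ^ k * g * u n (i0 n hn) ^ (-k) ∈ H n hn)
    (fun s hs => hconjS hn s hs k) ?_ ?_ ?_ hg
  · beta_reduce
    have : u n (i0 n hn) ^ k * 1 * u n (i0 n hn) ^ (-k) = 1 := by group
    rw [this]; exact one_mem _
  · intro x y _ _ hx hy
    beta_reduce
    have : u n (i0 n hn) ^ k * (x * y) * u n (i0 n hn) ^ (-k) =
        (u n (i0 n hn) ^ k * x * u n (i0 n hn) ^ (-k)) *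
          (u n (i0 n hn) ^ k * y * u n (i0 n hn) ^ (-k)) := by group
    rw [this]; exact mul_mem hx hy
  · intro x _ hx
    beta_reduce
    have : u n (i0 n hn) ^ k * x⁻¹ * u n (i0 n hn) ^ (-k) =
        (u n (i0 n hn) ^ k * x * u n (i0 n hn) ^ (-k))⁻¹ := by group
    rw [this]; exact inv_mem hx


def T (φ : (Fin n → FF) →* Multiplicative ℤ) : Subgroup (Fin n → FF) where
  carrier := {g | g * u n (i0 n hn) ^ (-(Multiplicative.toAdd (φ g))) ∈ H n hn}
  one_mem' := by simpa using one_mem (H n hn)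
  mul_mem' := by
    intro x y hx hy
    simp only [Set.mem_setOf_eq] at hx hy ⊢
    have key : x * y * u n (i0 n hn) ^ (-(Multiplicative.toAdd (φ (x * y)))) =
        (x * u n (i0 n hn) ^ (-(Multiplicative.toAdd (φ x)))) *
          (u n (i0 n hn) ^ (Multiplicative.toAdd (φ x)) *
            (y * u n (i0 n hn) ^ (-(Multiplicative.toAdd (φ y)))) *
            u n (i0 n hn) ^ (-(Multiplicative.toAdd (φ x)))) := by
      rw [map_mul, toAdd_mul]; group
    rw [key]
    exact mul_mem hx (hconj hn _ hy)
  inv_mem' := by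
    intro x hx
    simp only [Set.mem_setOf_eq] at hx ⊢
    have key : x⁻¹ * u n (i0 n hn) ^ (-(Multiplicative.toAdd (φ x⁻¹))) =
        u n (i0 n hn) ^ (-(Multiplicative.toAdd (φ x))) *
          (x * u n (i0 n hn) ^ (-(Multiplicative.toAdd (φ x))))⁻¹ *
          u n (i0 n hn) ^ (-(-(Multiplicative.toAdd (φ x)))) := by
      rw [map_inv, toAdd_inv]; group
    rw [key]
    exact hconj hn _ (inv_mem hx)

end

end BBaux

theorem free_group_power_fibres (n : ℕ) (hn : 2 ≤ n)
    (φ : ((Fin n) → FreeGroup (Fin 2)) →* Multiplicative ℤ)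
    (hφ : ∀ (i : Fin n) (x : Fin 2),
      φ (Pi.mulSingle i (FreeGroup.of x)) = Multiplicative.ofAdd 1) :
    Function.Surjective φ ∧ (MonoidHom.ker φ).FG := by
  constructor
  · intro z
    refine ⟨BBaux.u n (BBaux.i0 n hn) ^ Multiplicative.toAdd z, ?_⟩
    have h1 : φ (BBaux.u n (BBaux.i0 n hn)) = Multiplicative.ofAdd 1 := hφ _ 0
    rw [map_zpow, h1, ← ofAdd_zsmul, smul_eq_mul, mul_one, ofAdd_toAdd]
  · have hψ : ∀ (i : Fin n) (a : BBaux.FF), φ (Pi.mulSingle i a) = BBaux.ψ a := by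
      intro i a
      have h : φ.comp (MonoidHom.mulSingle (fun _ : Fin n => BBaux.FF) i) = BBaux.ψ :=
        FreeGroup.ext_hom _ _ fun x => by
          simp only [MonoidHom.comp_apply, MonoidHom.mulSingle_apply]
          rw [hφ i x, BBaux.ψ_of]
      exact DFunLike.congr_fun h a
    have hsingle : ∀ (i : Fin n) (a : BBaux.FF), Pi.mulSingle i a ∈ BBaux.T hn φ := by
      intro i a
      show Pi.mulSingle i a *
        BBaux.u n (BBaux.i0 n hn) ^ (-(Multiplicative.toAdd (φ (Pi.mulSingle i a)))) ∈
          BBaux.H n hn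
      rw [hψ i a]
      exact BBaux.step1' hn i a
    have hT : ∀ g, g ∈ BBaux.T hn φ := by
      intro g
      have hcomm' : Pairwise fun i j : Fin n => ∀ (x y : BBaux.FF),
          Commute ((MonoidHom.mulSingle (fun _ : Fin n => BBaux.FF) i) x)
            ((MonoidHom.mulSingle (fun _ : Fin n => BBaux.FF) j) y) := by
        intro i j h x y
        exact Pi.mulSingle_commute (f := fun _ => BBaux.FF) h x y
      have hν : MonoidHom.noncommPiCoprod _ hcomm' = MonoidHom.id _ :=
        MonoidHom.pi_ext fun i x => by simp
      have hgr : g ∈ (MonoidHom.noncommPiCoprod _ hcomm').range := ⟨g, by rw [hν]; rfl⟩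
      rw [MonoidHom.noncommPiCoprod_range] at hgr
      refine (iSup_le (fun i => ?_) : _ ≤ BBaux.T hn φ) hgr
      rintro x ⟨a, rfl⟩
      exact hsingle i a
    have hHK : BBaux.H n hn ≤ MonoidHom.ker φ := by
      refine (Subgroup.closure_le _).mpr ?_
      rintro s ((⟨i, rfl⟩ | ⟨i, rfl⟩) | rfl) <;> beta_reduce <;>
      · show _ ∈ MonoidHom.ker φ
        rw [MonoidHom.mem_ker]
        simp [hψ, map_mul, map_inv, BBaux.ψ_of]
    have hKH : MonoidHom.ker φ ≤ BBaux.H n hn := by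
      intro g hg
      have h : g * BBaux.u n (BBaux.i0 n hn) ^ (-(Multiplicative.toAdd (φ g))) ∈
          BBaux.H n hn := hT g
      have h0 : Multiplicative.toAdd (φ g) = 0 := by
        rw [MonoidHom.mem_ker] at hg; rw [hg]; rfl
      rw [h0] at h
      simpa using h
    exact (Subgroup.fg_iff _).mpr ⟨BBaux.S n hn, le_antisymm hHK hKH, BBaux.S_finite n hn⟩
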